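/- Let α_1,…,α_n ∈ F_q be distinct, h(z) = Π(z - α_i), and suppose there exist λ(z), u(z), s(z) ∈ F_q[z] with s(α_i) ≠ 0 for all i, such that λ(z)s(z)^2 = u(z)h(z) + h'(z). Let v_i = s(α_i)^{-1} and let ε = deg u if u ≠ 0 and ε = -1 if u = 0. If k + ε/2 ≤ deg s(z), then GRS_k(α, v) is self-orthogonal: GRS_k(α, v) ⊆ GRS_k(α, v)^⊥. -/

import Mathlib

open Polynomial Finset

/-- The Euclidean dual code of a linear code `C ⊆ F^n`. -/
def dualCode {F : Type*} [Field F] {n : ℕ} (C : Submodule F (Fin n → F)) :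
    Submodule F (Fin n → F) where
  carrier := {x | ∀ y ∈ C, ∑ i, x i * y i = 0}
  add_mem' := by
    intro a b ha hb y hy
    simp only [Set.mem_setOf_eq, Pi.add_apply, add_mul] at *
    rw [Finset.sum_add_distrib, ha y hy, hb y hy, add_zero]
  zero_mem' := by intro y hy; simp
  smul_mem' := by
    intro c a ha y hy
    simp only [Set.mem_setOf_eq, Pi.smul_apply, smul_eq_mul, mul_assoc] at *
    rw [← Finset.mul_sum, ha y hy, mul_zero]

/-- The generalized Reed–Solomon code `GRS_k(α, v)`. -/
def GRSCode {F : Type*} [Field F] {n : ℕ} (k : ℕ) (α v : Fin n → F) :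
    Submodule F (Fin n → F) where
  carrier := {c | ∃ f : Polynomial F, f.degree < k ∧ c = fun i => v i * f.eval (α i)}
  add_mem' := by
    rintro a b ⟨f, hf, rfl⟩ ⟨g, hg, rfl⟩
    exact ⟨f + g, lt_of_le_of_lt (Polynomial.degree_add_le f g) (max_lt hf hg),
      by funext i; simp [mul_add]⟩
  zero_mem' := ⟨0, by rw [Polynomial.degree_zero]; exact bot_lt_iff_ne_bot.mpr (by simp), by funext i; simp⟩
  smul_mem' := by
    rintro c a ⟨f, hf, rfl⟩
    exact ⟨c • f, lt_of_le_of_lt (Polynomial.degree_smul_le c f) hf,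
      by funext i; simp [Polynomial.eval_smul]; ring⟩



lemma basis_eq_C_nodalWeight_mul_nodal_erase {F : Type*} [Field F] {ι : Type*} [DecidableEq ι]
    (s : Finset ι) (v : ι → F) (i : ι) :
    Lagrange.basis s v i
      = C (Lagrange.nodalWeight s v i) * Lagrange.nodal (s.erase i) v := by
  simp_rw [Lagrange.basis, Lagrange.basisDivisor, Lagrange.nodal, Lagrange.nodalWeight,
    prod_mul_distrib, map_prod]

lemma sum_nodalWeight_mul_eval {F : Type*} [Field F] {ι : Type*} [DecidableEq ι]
    (s : Finset ι) (v : ι → F) (hvs : Set.InjOn v s) (P : F[X])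
    (hP : P.degree < s.card) :
    ∑ i ∈ s, Lagrange.nodalWeight s v i * P.eval (v i) = P.coeff (s.card - 1) := by
  conv_rhs => rw [Lagrange.eq_interpolate hvs hP]
  rw [Lagrange.interpolate_apply, finset_sum_coeff]
  refine Finset.sum_congr rfl fun i hi => ?_
  rw [basis_eq_C_nodalWeight_mul_nodal_erase, ← mul_assoc, ← C_mul, coeff_C_mul]
  have hc : (s.erase i).card = s.card - 1 := Finset.card_erase_of_mem hi
  have h1 : (Lagrange.nodal (s.erase i) v).coeff (s.card - 1) = 1 := by
    rw [← hc, ← Lagrange.natDegree_nodal (s := s.erase i) (v := v)]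
    exact Lagrange.nodal_monic.coeff_natDegree
  rw [h1, mul_one, mul_comm]

open Classical in
theorem GRSCode_selfOrthogonal' {F : Type*} [Field F] {n : ℕ}
    (α : Fin n → F) (hα : Function.Injective α)
    (h : Polynomial F) (hh : h = ∏ i, (Polynomial.X - Polynomial.C (α i)))
    (k : ℕ) (hk : 1 ≤ k) (hkn : k < n)
    (lam u s : Polynomial F) (hs : ∀ i, s.eval (α i) ≠ 0)
    (heq : lam * s ^ 2 = u * h + Polynomial.derivative h)
    (ε : ℤ) (hε : ε = if u = 0 then -1 else (u.natDegree : ℤ))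
    (hsdeg : 2 * (k : ℤ) + ε ≤ 2 * (s.natDegree : ℤ))
    (v : Fin n → F) (hv : ∀ i, v i = (s.eval (α i))⁻¹) :
    ∀ f g : Polynomial F, f.degree < k → g.degree < k →
      ∑ i, (v i * f.eval (α i)) * (v i * g.eval (α i)) = 0 := by
  intro f g hf hg
  have hn : 0 < n := by omega
  have hαinj : Set.InjOn α (Finset.univ : Finset (Fin n)) := hα.injOn
  have hnod : h = Lagrange.nodal Finset.univ α := by rw [hh, Lagrange.nodal]
  have hw : ∀ i : Fin n, Lagrange.nodalWeight Finset.univ α i ≠ 0 :=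
    fun i => Lagrange.nodalWeight_ne_zero hαinj (mem_univ i)
  have hwd : ∀ i, Lagrange.nodalWeight Finset.univ α i
      = ((Polynomial.derivative h).eval (α i))⁻¹ := fun i => by
    rw [hnod]; exact Lagrange.nodalWeight_eq_eval_derivative_nodal (mem_univ i)
  have hd0 : ∀ i, (Polynomial.derivative h).eval (α i) ≠ 0 := fun i => by
    intro h0; apply hw i; rw [hwd i, h0, inv_zero]
  have hev : ∀ i, lam.eval (α i) * (s.eval (α i))^2
      = (Polynomial.derivative h).eval (α i) := by
    intro i
    have h0 : h.eval (α i) = 0 := by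
      rw [hh, eval_prod]; exact Finset.prod_eq_zero (mem_univ i) (by simp)
    have := congrArg (eval (α i)) heq
    simpa [h0] using this
  have key : ∀ i : Fin n, v i * f.eval (α i) * (v i * g.eval (α i))
      = Lagrange.nodalWeight Finset.univ α i * (f * g * lam).eval (α i) := by
    intro i
    rw [hv i, hwd i, eval_mul, eval_mul]
    have h1 := hs i; have h2 := hd0 i; have h3 := hev i
    field_simp
    linear_combination (-(f.eval (α i) * g.eval (α i))) * h3
  -- lam ≠ 0
  have hlam0 : lam ≠ 0 := by
    intro h0
    apply hd0 ⟨0, hn⟩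
    rw [← hev ⟨0, hn⟩, h0, eval_zero, zero_mul]
  -- degree bound
  have hdeglt : (f * g * lam).degree < ((n - 1 : ℕ) : WithBot ℕ) := by
    rcases eq_or_ne (f * g) 0 with h0 | h0
    · rw [h0, zero_mul, degree_zero]
      exact bot_lt_iff_ne_bot.mpr (by simp)
    · have hf0 : f ≠ 0 := fun hf0 => h0 (by simp [hf0])
      have hg0 : g ≠ 0 := fun hg0 => h0 (by simp [hg0])
      rw [← natDegree_lt_iff_degree_lt (mul_ne_zero h0 hlam0)]
      rw [natDegree_mul h0 hlam0, natDegree_mul hf0 hg0]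
      have hnf : f.natDegree < k := (natDegree_lt_iff_degree_lt hf0).mpr hf
      have hng : g.natDegree < k := (natDegree_lt_iff_degree_lt hg0).mpr hg
      have hs0 : s ≠ 0 := fun h' => hs ⟨0, hn⟩ (by simp [h'])
      have hhmon : h.Monic := hh ▸ monic_prod_of_monic _ _ fun i _ => monic_X_sub_C _
      have hhdeg : h.natDegree = n := by
        rw [hnod, Lagrange.natDegree_nodal, card_univ, Fintype.card_fin]
      have hdnat : (Polynomial.derivative h).natDegree ≤ n - 1 :=
        hhdeg ▸ Polynomial.natDegree_derivative_le h
      have hml : (lam * s ^ 2).natDegree = lam.natDegree + 2 * s.natDegree := by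
        rw [natDegree_mul hlam0 (pow_ne_zero _ hs0), natDegree_pow]
      subst hε
      by_cases hu : u = 0
      · have hd : (lam * s ^ 2).natDegree = (Polynomial.derivative h).natDegree := by
          rw [heq, hu, zero_mul, zero_add]
        rw [hml] at hd
        rw [if_pos hu] at hsdeg
        omega
      · have huh : (u * h).natDegree = u.natDegree + n := by
          rw [natDegree_mul hu hhmon.ne_zero, hhdeg]
        have hd : (lam * s ^ 2).natDegree = u.natDegree + n := by
          rw [heq, natDegree_add_eq_left_of_natDegree_lt (by omega), huh]
        rw [hml] at hd
        rw [if_neg hu] at hsdeg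
        omega
  calc ∑ i, (v i * f.eval (α i)) * (v i * g.eval (α i))
      = ∑ i : Fin n, Lagrange.nodalWeight Finset.univ α i * (f * g * lam).eval (α i) :=
        Finset.sum_congr rfl fun i _ => key i
    _ = (f * g * lam).coeff (n - 1) := by
        have hcard : (Finset.univ : Finset (Fin n)).card = n := by simp
        have hlt : (f * g * lam).degree < ((Finset.univ : Finset (Fin n)).card : WithBot ℕ) := by
          rw [hcard]; exact hdeglt.trans (Nat.cast_lt.mpr (by omega))
        have := sum_nodalWeight_mul_eval Finset.univ α hαinj (f * g * lam) hlt
        rw [hcard] at this; exact this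
    _ = 0 := Polynomial.coeff_eq_zero_of_degree_lt hdeglt

open Classical in
theorem GRSCode_selfOrthogonal {F : Type*} [Field F] {n : ℕ}
    (α : Fin n → F) (hα : Function.Injective α)
    (h : Polynomial F) (hh : h = ∏ i, (Polynomial.X - Polynomial.C (α i)))
    (k : ℕ) (hk : 1 ≤ k) (hkn : k < n)
    (lam u s : Polynomial F) (hs : ∀ i, s.eval (α i) ≠ 0)
    (heq : lam * s ^ 2 = u * h + Polynomial.derivative h)
    (ε : ℤ) (hε : ε = if u = 0 then -1 else (u.natDegree : ℤ))
    (hsdeg : 2 * (k : ℤ) + ε ≤ 2 * (s.natDegree : ℤ))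
    (v : Fin n → F) (hv : ∀ i, v i = (s.eval (α i))⁻¹) :
    GRSCode k α v ≤ dualCode (GRSCode k α v) := by
  rintro c ⟨f, hf, rfl⟩ y ⟨g, hg, rfl⟩
  exact GRSCode_selfOrthogonal' α hα h hh k hk hkn lam u s hs heq ε hε hsdeg v hv f g hf hg
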